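/- If h ∈ ℓ²(ℕ) satisfies ℱh = h, where (ℱh)_m = h_{m/2} for m even and (ℱh)_m = h_{(3m+1)/2} for m odd, then h is supported at index 0 only, i.e. h corresponds to a constant function. Hence dim Ker(Id − ℱ) = 1 on H²(D). -/

import Mathlib

/-- The operator `ℱ` on coefficient sequences: `(ℱh)_m = h_{m/2}` for even `m`,
`(ℱh)_m = h_{(3m+1)/2}` for odd `m`. -/
def opF (a : ℕ → ℂ) : ℕ → ℂ :=
  fun m => if m % 2 = 0 then a (m / 2) else a ((3 * m + 1) / 2)

/-- an `ℓ²` fixed point of `ℱ` is supported at index `0` only,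
i.e. corresponds to a constant function; hence `dim Ker(Id − ℱ) = 1` on `H²(D)`. -/
theorem opF_fixed_point_constant (h : ℕ → ℂ)
    (hl2 : Summable (fun n => ‖h n‖ ^ 2)) (hfix : opF h = h) :
    ∀ n : ℕ, 1 ≤ n → h n = 0 := by
  intro n hn
  have double : ∀ m : ℕ, h m = h (2 * m) := by
    intro m
    have := congrFun hfix (2 * m)
    simp [opF, Nat.mul_mod_right, Nat.mul_div_cancel_left] at this
    exact this
  have key : ∀ k : ℕ, h n = h (2 ^ k * n) := by
    intro k
    induction k with
    | zero => simp
    | succ k ih =>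
      rw [ih, double (2 ^ k * n)]
      ring_nf
  have hmono : Filter.Tendsto (fun k : ℕ => 2 ^ k * n) Filter.atTop Filter.atTop := by
    apply Filter.tendsto_atTop_mono (f := fun k : ℕ => 2 ^ k)
    · intro k
      exact Nat.le_mul_of_pos_right _ hn
    · exact tendsto_pow_atTop_atTop_of_one_lt one_lt_two
  have hz : Filter.Tendsto (fun m : ℕ => ‖h m‖ ^ 2) Filter.atTop (nhds 0) :=
    hl2.tendsto_atTop_zero
  have hz2 : Filter.Tendsto (fun k : ℕ => ‖h (2 ^ k * n)‖ ^ 2) Filter.atTop (nhds 0) :=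
    hz.comp hmono
  have hconst : (fun k : ℕ => ‖h (2 ^ k * n)‖ ^ 2) = fun _ => ‖h n‖ ^ 2 := by
    funext k; rw [← key k]
  rw [hconst] at hz2
  have : ‖h n‖ ^ 2 = 0 := tendsto_nhds_unique tendsto_const_nhds hz2
  simpa using this
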